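/- For any two convex bodies K, L in R^n containing the origin in their interiors, |(K ∩ L)°| · |((K - L)/2)°| ≤ 2^n |K°| |L°|, where K° denotes the polar body. Consequently, |K ∩ L| · |conv(K ∪ (-L))| ≤ 2^n |K| |L|, using (K ∩ L)° = conv(K° ∪ L°) and (K - L)/2 ⊆ conv(K ∪ (-L)). -/

import Mathlib

open MeasureTheory Set Pointwise Topology
open scoped ENNReal
open scoped RealInnerProductSpace

def polarBody {n : ℕ} (K : Set (EuclideanSpace ℝ (Fin n))) :
    Set (EuclideanSpace ℝ (Fin n)) :=
  {x | ∀ y ∈ K, ⟪x, y⟫ ≤ 1}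

namespace PRS

abbrev Eu (n : ℕ) := EuclideanSpace ℝ (Fin n)

variable {n : ℕ} {A B C K L : Set (Eu n)} {x : Eu n}

lemma body_nhds (h0 : (0 : Eu n) ∈ interior C) : C ∈ 𝓝 0 :=
  mem_interior_iff_mem_nhds.1 h0

lemma body_absorbent (h0 : (0 : Eu n) ∈ interior C) : Absorbent ℝ C :=
  absorbent_nhds_zero (body_nhds h0)

lemma gauge_le_one_iff (hc : IsCompact C) (hconv : Convex ℝ C)
    (h0 : (0 : Eu n) ∈ interior C) : gauge C x ≤ 1 ↔ x ∈ C := by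
  rw [gauge_le_one_iff_mem_closure hconv (body_nhds h0), hc.isClosed.closure_eq]

lemma vol_gauge_le (hn : 0 < n) (hc : IsCompact C) (hconv : Convex ℝ C)
    (h0 : (0 : Eu n) ∈ interior C) (t : ℝ) :
    volume {y : Eu n | gauge C y ≤ t} = ENNReal.ofReal t ^ n * volume C := by
  rcases lt_trichotomy t 0 with ht | rfl | ht
  · have he : {y : Eu n | gauge C y ≤ t} = ∅ :=
      eq_empty_of_forall_notMem fun y hy =>
        absurd (le_trans (gauge_nonneg y) hy) (not_le.2 ht)
    rw [he, ENNReal.ofReal_of_nonpos ht.le, zero_pow hn.ne', zero_mul, measure_empty]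
  · have he : {y : Eu n | gauge C y ≤ 0} = {0} := by
      ext y
      simp only [mem_setOf_eq, mem_singleton_iff]
      constructor
      · intro h
        exact (gauge_eq_zero (body_absorbent h0)
          (NormedSpace.isVonNBounded_of_isBounded _ hc.isBounded)).1
          (le_antisymm h (gauge_nonneg y))
      · rintro rfl; simp [gauge_zero]
    have h0C : (0 : Eu n) ∈ C := interior_subset h0
    have hz : ({0} : Set (Eu n)) = (0 : ℝ) • C := by
      rw [zero_smul_set ⟨0, h0C⟩]; rfl
    rw [he, ENNReal.ofReal_zero, zero_pow hn.ne', zero_mul, hz,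
      Measure.addHaar_smul volume 0 C, finrank_euclideanSpace_fin,
      zero_pow hn.ne', abs_zero, ENNReal.ofReal_zero, zero_mul]
  · have hset : {y : Eu n | gauge C y ≤ t} = t • C := by
      ext y
      rw [mem_smul_set_iff_inv_smul_mem₀ ht.ne']
      rw [← gauge_le_one_iff hc hconv h0, gauge_smul_of_nonneg (inv_nonneg.2 ht.le)]
      simp only [smul_eq_mul, mem_setOf_eq]
      rw [inv_mul_le_iff₀ ht, mul_one]
    rw [hset, Measure.addHaar_smul_of_nonneg volume ht.le C, finrank_euclideanSpace_fin,
      ENNReal.ofReal_pow ht.le]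

lemma isCompact_convexHull_union (hAc : IsCompact A) (hBc : IsCompact B)
    (hAconv : Convex ℝ A) (hBconv : Convex ℝ B) (hA0 : A.Nonempty) (hB0 : B.Nonempty) :
    IsCompact (convexHull ℝ (A ∪ B)) := by
  rw [hAconv.convexHull_union hBconv hA0 hB0]
  have himg : convexJoin ℝ A B =
      (fun p : ℝ × Eu n × Eu n => p.2.1 + p.1 • (p.2.2 - p.2.1)) ''
        (Icc (0 : ℝ) 1 ×ˢ A ×ˢ B) := by
    ext x
    constructor
    · intro hx
      rw [mem_convexJoin] at hx
      obtain ⟨a, ha, b, hb, hx⟩ := hx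
      rw [segment_eq_image'] at hx
      obtain ⟨θ, hθ, rfl⟩ := hx
      exact ⟨(θ, a, b), ⟨hθ, ha, hb⟩, rfl⟩
    · rintro ⟨⟨θ, a, b⟩, ⟨hθ, ha, hb⟩, rfl⟩
      rw [mem_convexJoin]
      exact ⟨a, ha, b, hb, segment_eq_image' ℝ a b ▸ mem_image_of_mem _ hθ⟩
  rw [himg]
  exact (isCompact_Icc.prod (hAc.prod hBc)).image (by fun_prop)


/-! ### polar body basics -/

lemma mem_polar_iff {K : Set (Eu n)} : x ∈ polarBody K ↔ ∀ y ∈ K, ⟪x, y⟫ ≤ 1 := Iff.rfl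

lemma zero_mem_polar (K : Set (Eu n)) : (0 : Eu n) ∈ polarBody K := by
  intro y hy; simp

lemma polar_convex (K : Set (Eu n)) : Convex ℝ (polarBody K) := by
  intro u hu v hv a b ha hb hab
  intro y hy
  have := hu y hy
  have := hv y hy
  calc ⟪a • u + b • v, y⟫ = a * ⟪u, y⟫ + b * ⟪v, y⟫ := by
        rw [inner_add_left, real_inner_smul_left, real_inner_smul_left]
    _ ≤ a * 1 + b * 1 :=
        add_le_add (mul_le_mul_of_nonneg_left (hu y hy) ha)
          (mul_le_mul_of_nonneg_left (hv y hy) hb)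
    _ = 1 := by linarith

lemma polar_isClosed (K : Set (Eu n)) : IsClosed (polarBody K) := by
  have : polarBody K = ⋂ y ∈ K, {x : Eu n | ⟪x, y⟫ ≤ 1} := by
    ext x; simp [mem_polar_iff]
  rw [this]
  exact isClosed_biInter fun y _ =>
    isClosed_le (Continuous.inner continuous_id continuous_const) continuous_const

lemma polar_antitone (h : K ⊆ L) : polarBody L ⊆ polarBody K :=
  fun _ hx y hy => hx y (h hy)

lemma polar_isCompact (h0 : (0 : Eu n) ∈ interior K) : IsCompact (polarBody K) := by
  obtain ⟨ε, hε, hball⟩ := Metric.isOpen_iff.1 isOpen_interior 0 h0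
  have hsub : polarBody K ⊆ Metric.closedBall 0 (2 / ε) := by
    intro x hx
    rw [Metric.mem_closedBall, dist_zero_right]
    rcases eq_or_ne x 0 with rfl | hx0
    · simp; positivity
    · have hxn : (0 : ℝ) < ‖x‖ := norm_pos_iff.2 hx0
      have hy : (ε / 2 / ‖x‖) • x ∈ K := by
        apply interior_subset
        apply hball
        rw [Metric.mem_ball, dist_zero_right, norm_smul]
        rw [Real.norm_eq_abs, abs_of_pos (by positivity)]
        rw [div_mul_cancel₀ _ hxn.ne']
        linarith
      have := hx _ hy
      rw [real_inner_smul_right, real_inner_self_eq_norm_sq] at this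
      have key : ε / 2 * ‖x‖ ≤ 1 := by
        have : ε / 2 / ‖x‖ * ‖x‖ ^ 2 = ε / 2 * ‖x‖ := by
          field_simp
        linarith [this ▸ ‹ε / 2 / ‖x‖ * ‖x‖ ^ 2 ≤ 1›]
      rw [le_div_iff₀ hε]
      nlinarith
  exact (isCompact_closedBall _ _).of_isClosed_subset (polar_isClosed K) hsub

lemma zero_mem_interior_polar (hc : IsCompact K) : (0 : Eu n) ∈ interior (polarBody K) := by
  obtain ⟨R, hR⟩ := hc.isBounded.subset_closedBall 0
  have hR1 : (0:ℝ) < max R 1 := lt_max_of_lt_right one_pos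
  have hsub : Metric.ball (0 : Eu n) (max R 1)⁻¹ ⊆ polarBody K := by
    intro x hx y hy
    rw [Metric.mem_ball, dist_zero_right] at hx
    have hy' : ‖y‖ ≤ max R 1 :=
      le_trans (by simpa [dist_zero_right] using hR hy) (le_max_left _ _)
    calc ⟪x, y⟫ ≤ ‖x‖ * ‖y‖ := real_inner_le_norm x y
      _ ≤ (max R 1)⁻¹ * max R 1 := by
          apply mul_le_mul hx.le hy' (norm_nonneg _) (inv_nonneg.2 hR1.le)
      _ = 1 := inv_mul_cancel₀ hR1.ne'
  exact mem_interior.2 ⟨_, hsub, Metric.isOpen_ball, by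
    simp [Metric.mem_ball, inv_pos, hR1]⟩

lemma polar_neg : polarBody (-L) = -polarBody L := by
  ext x
  have : x ∈ polarBody (-L) ↔ ∀ y ∈ L, ⟪-x, y⟫ ≤ 1 := by
    constructor
    · intro h y hy
      have := h (-y) (by simpa using hy)
      rwa [← inner_neg_neg x (-y), neg_neg] at this
    · intro h y hy
      rw [Set.mem_neg] at hy
      have := h (-y) hy
      rwa [inner_neg_neg] at this
  rw [this, Set.mem_neg]
  exact Iff.rfl


/-! ### bipolar and polar of intersection -/

lemma bipolar (hc : IsCompact K) (hconv : Convex ℝ K) (h0K : (0 : Eu n) ∈ K) :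
    polarBody (polarBody K) = K := by
  apply Subset.antisymm
  · intro x hx
    by_contra hxK
    obtain ⟨f, u, hfs, hfx⟩ := geometric_hahn_banach_closed_point hconv hc.isClosed hxK
    have hu : 0 < u := by
      have := hfs 0 h0K
      simpa using this
    set w : Eu n := (InnerProductSpace.toDual ℝ (Eu n)).symm f with hwdef
    have hw : ∀ z : Eu n, ⟪w, z⟫ = f z := fun z => InnerProductSpace.toDual_symm_apply
    have hyK : u⁻¹ • w ∈ polarBody K := by
      intro z hz
      have hfz : f z < u := hfs z hz
      have h1 : ⟪u⁻¹ • w, z⟫ = u⁻¹ * f z := by rw [real_inner_smul_left, hw]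
      rw [h1]
      rw [inv_mul_le_iff₀ hu, mul_one]
      exact hfz.le
    have h2 := hx _ hyK
    have h3 : ⟪x, u⁻¹ • w⟫ = u⁻¹ * f x := by
      rw [real_inner_comm, real_inner_smul_left, hw]
    rw [h3, inv_mul_le_iff₀ hu, mul_one] at h2
    exact absurd h2 (not_le.2 hfx)
  · intro k hk y hy
    have := hy k hk
    rwa [real_inner_comm] at this

lemma polar_inter (hKc : IsCompact K) (hKconv : Convex ℝ K)
    (hLc : IsCompact L) (hLconv : Convex ℝ L)
    (h0K : (0 : Eu n) ∈ interior K) (h0L : (0 : Eu n) ∈ interior L) :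
    polarBody (K ∩ L) = convexHull ℝ (polarBody K ∪ polarBody L) := by
  have hPc : IsCompact (convexHull ℝ (polarBody K ∪ polarBody L)) :=
    isCompact_convexHull_union (polar_isCompact h0K) (polar_isCompact h0L)
      (polar_convex K) (polar_convex L) ⟨0, zero_mem_polar K⟩ ⟨0, zero_mem_polar L⟩
  apply Subset.antisymm
  · intro x hx
    by_contra hxP
    obtain ⟨f, u, hfs, hfx⟩ :=
      geometric_hahn_banach_closed_point (convex_convexHull ℝ _) hPc.isClosed hxP
    have hu : 0 < u := by
      have := hfs 0 (subset_convexHull ℝ _ (Or.inl (zero_mem_polar K)))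
      simpa using this
    set y : Eu n := u⁻¹ • (InnerProductSpace.toDual ℝ (Eu n)).symm f with hy
    have hyz : ∀ z : Eu n, ⟪y, z⟫ = u⁻¹ * f z := by
      intro z
      rw [hy, real_inner_smul_left]
      rw [InnerProductSpace.toDual_symm_apply]
    have hymem : ∀ M : Set (Eu n), IsCompact M → Convex ℝ M → (0 : Eu n) ∈ interior M →
        polarBody M ⊆ convexHull ℝ (polarBody K ∪ polarBody L) → y ∈ M := by
      intro M hMc hMconv h0M hsub
      rw [← bipolar hMc hMconv (interior_subset h0M)]
      intro z hz
      have hfz : f z < u := hfs z (hsub hz)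
      rw [hyz z, inv_mul_le_iff₀ hu, mul_one]
      exact hfz.le
    have hyK : y ∈ K := hymem K hKc hKconv h0K
      (fun z hz => subset_convexHull ℝ _ (Or.inl hz))
    have hyL : y ∈ L := hymem L hLc hLconv h0L
      (fun z hz => subset_convexHull ℝ _ (Or.inr hz))
    have := hx y ⟨hyK, hyL⟩
    have hxy : ⟪x, y⟫ = u⁻¹ * f x := by rw [real_inner_comm, hyz x]
    rw [hxy, inv_mul_le_iff₀ hu, mul_one] at this
    exact absurd this (not_le.2 hfx)
  · apply convexHull_min _ (polar_convex _)
    apply union_subset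
    · exact polar_antitone inter_subset_left
    · exact polar_antitone inter_subset_right


/-! ### gauge of polar = support function -/

noncomputable def supp (K : Set (Eu n)) (x : Eu n) : ℝ :=
  sSup ((fun k => ⟪x, k⟫) '' K)

lemma supp_bddAbove (hc : IsCompact K) (x : Eu n) :
    BddAbove ((fun k => ⟪x, k⟫) '' K) :=
  (hc.image (Continuous.inner continuous_const continuous_id)).bddAbove

lemma supp_nonneg (hc : IsCompact K) (h0K : (0 : Eu n) ∈ K) (x : Eu n) :
    0 ≤ supp K x := by
  have : (0 : ℝ) ∈ (fun k => ⟪x, k⟫) '' K := ⟨0, h0K, by simp⟩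
  exact le_csSup (supp_bddAbove hc x) this

lemma le_supp (hc : IsCompact K) {k : Eu n} (hk : k ∈ K) (x : Eu n) :
    ⟪x, k⟫ ≤ supp K x :=
  le_csSup (supp_bddAbove hc x) ⟨k, hk, rfl⟩

lemma mem_smul_polar_iff (hKc : IsCompact K) (h0K : (0 : Eu n) ∈ K) {r : ℝ} (hr : 0 < r)
    {x : Eu n} : x ∈ r • polarBody K ↔ supp K x ≤ r := by
  rw [mem_smul_set_iff_inv_smul_mem₀ hr.ne']
  constructor
  · intro h
    apply csSup_le (Nonempty.image _ ⟨0, h0K⟩)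
    rintro a ⟨k, hk, rfl⟩
    have := h k hk
    rw [real_inner_smul_left, inv_mul_le_iff₀ hr, mul_one] at this
    exact this
  · intro h k hk
    have := (le_supp hKc hk x).trans h
    show ⟪r⁻¹ • x, k⟫ ≤ 1
    rw [real_inner_smul_left, inv_mul_le_iff₀ hr, mul_one]
    exact this

lemma gauge_polar_eq_supp (hKc : IsCompact K) (h0K : (0 : Eu n) ∈ K) (x : Eu n) :
    gauge (polarBody K) x = supp K x := by
  rw [gauge_def]
  have hset : {r ∈ Set.Ioi (0:ℝ) | x ∈ r • polarBody K}
      = {r : ℝ | 0 < r ∧ supp K x ≤ r} := by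
    ext r
    simp only [Set.mem_setOf_eq, Set.mem_sep_iff, Set.mem_Ioi]
    constructor
    · rintro ⟨hr, hx⟩
      exact ⟨hr, (mem_smul_polar_iff hKc h0K hr).1 hx⟩
    · rintro ⟨hr, hx⟩
      exact ⟨hr, (mem_smul_polar_iff hKc h0K hr).2 hx⟩
  rw [hset]
  rcases lt_or_eq_of_le (supp_nonneg hKc h0K x) with hpos | hzero
  · have : {r : ℝ | 0 < r ∧ supp K x ≤ r} = Set.Ici (supp K x) := by
      ext r
      simp only [Set.mem_setOf_eq, Set.mem_Ici]
      exact ⟨fun h => h.2, fun h => ⟨lt_of_lt_of_le hpos h, h⟩⟩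
    rw [this, csInf_Ici]
  · have : {r : ℝ | 0 < r ∧ supp K x ≤ r} = Set.Ioi 0 := by
      ext r
      simp only [Set.mem_setOf_eq, Set.mem_Ioi]
      exact ⟨fun h => h.1, fun h => ⟨h, hzero ▸ h.le⟩⟩
    rw [this, csInf_Ioi, hzero]


/-! ### measure-theoretic core -/

noncomputable def Jint (C : Set (Eu n)) : ℝ≥0∞ :=
  ∫⁻ x, (ENNReal.ofReal (1 - gauge C x)) ^ n

def Dset (P Q : Set (Eu n)) : Set (Eu n × Eu n) :=
  {p | gauge P p.1 + gauge Q p.2 ≤ 1}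

lemma gauge_continuous (hconv : Convex ℝ C) (h0 : (0 : Eu n) ∈ interior C) :
    Continuous (gauge C) :=
  continuous_gauge hconv (body_nhds h0)

lemma Dset_measurable (hPconv : Convex ℝ A) (h0P : (0 : Eu n) ∈ interior A)
    (hQconv : Convex ℝ B) (h0Q : (0 : Eu n) ∈ interior B) :
    MeasurableSet (Dset A B) := by
  have : IsClosed (Dset A B) := by
    apply isClosed_le _ continuous_const
    exact ((gauge_continuous hPconv h0P).comp continuous_fst).add
      ((gauge_continuous hQconv h0Q).comp continuous_snd)
  exact this.measurableSet

lemma Jint_measurable (hconv : Convex ℝ C) (h0 : (0 : Eu n) ∈ interior C) :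
    Measurable fun x : Eu n => (ENNReal.ofReal (1 - gauge C x)) ^ n := by
  apply Measurable.pow_const
  exact ENNReal.measurable_ofReal.comp
    ((measurable_const.sub (gauge_continuous hconv h0).measurable))

lemma vol_Dset (hn : 0 < n)
    (hAc : IsCompact A) (hAconv : Convex ℝ A) (h0A : (0 : Eu n) ∈ interior A)
    (hBc : IsCompact B) (hBconv : Convex ℝ B) (h0B : (0 : Eu n) ∈ interior B) :
    volume (Dset A B) = Jint A * volume B := by
  have hD := Dset_measurable hAconv h0A hBconv h0B
  rw [Measure.volume_eq_prod, Measure.prod_apply hD]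
  have hfib : ∀ x : Eu n, volume (Prod.mk x ⁻¹' Dset A B)
      = (ENNReal.ofReal (1 - gauge A x)) ^ n * volume B := by
    intro x
    have : Prod.mk x ⁻¹' Dset A B = {y : Eu n | gauge B y ≤ 1 - gauge A x} := by
      ext y
      simp only [Set.mem_preimage, Dset, Set.mem_setOf_eq]
      constructor <;> intro h <;> linarith
    rw [this, vol_gauge_le hn hBc hBconv h0B]
  simp_rw [hfib]
  rw [lintegral_mul_const _ (Jint_measurable hAconv h0A)]
  rfl

lemma vol_Dset_swap (hAconv : Convex ℝ A) (h0A : (0 : Eu n) ∈ interior A)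
    (hBconv : Convex ℝ B) (h0B : (0 : Eu n) ∈ interior B) :
    volume (Dset A B) = volume (Dset B A) := by
  have hD := Dset_measurable hAconv h0A hBconv h0B
  have hswap : Dset B A = Prod.swap ⁻¹' Dset A B := by
    ext p
    simp only [Set.mem_preimage, Dset, Set.mem_setOf_eq, Prod.fst_swap, Prod.snd_swap]
    constructor <;> intro h <;> linarith
  rw [hswap, Measure.volume_eq_prod]
  exact (Measure.measurePreserving_swap.measure_preimage hD.nullMeasurableSet).symm

lemma vol_Dset_shear (hAconv : Convex ℝ A) (h0A : (0 : Eu n) ∈ interior A)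
    (hBconv : Convex ℝ B) (h0B : (0 : Eu n) ∈ interior B) :
    volume (Dset A B)
      = ∫⁻ b, volume {x : Eu n | gauge A x + gauge B (x - b) ≤ 1} := by
  have hD := Dset_measurable hAconv h0A hBconv h0B
  set S : Set (Eu n × Eu n) := {p | gauge A p.1 + gauge B (p.1 - p.2) ≤ 1} with hSdef
  have hS : MeasurableSet S := by
    have : IsClosed S := by
      apply isClosed_le _ continuous_const
      exact ((gauge_continuous hAconv h0A).comp continuous_fst).add
        ((gauge_continuous hBconv h0B).comp (continuous_fst.sub continuous_snd))
    exact this.measurableSet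
  rw [Measure.volume_eq_prod, Measure.prod_apply hD]
  have step1 : ∀ x : Eu n, volume (Prod.mk x ⁻¹' Dset A B) = volume (Prod.mk x ⁻¹' S) := by
    intro x
    have hTm : MeasurableSet {y : Eu n | gauge A x + gauge B y ≤ 1} :=
      (isClosed_le (continuous_const.add (gauge_continuous hBconv h0B))
        continuous_const).measurableSet
    have hT : Prod.mk x ⁻¹' Dset A B = {y : Eu n | gauge A x + gauge B y ≤ 1} := rfl
    have hT2 : Prod.mk x ⁻¹' S
        = (fun b : Eu n => x - b) ⁻¹' {y : Eu n | gauge A x + gauge B y ≤ 1} := rfl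
    rw [hT, hT2, (Measure.measurePreserving_sub_left (volume : Measure (Eu n)) x).measure_preimage
      hTm.nullMeasurableSet]
  simp_rw [step1]
  have e1 : ∀ x : Eu n, volume (Prod.mk x ⁻¹' S)
      = ∫⁻ b, S.indicator (fun _ => (1 : ℝ≥0∞)) (x, b) := by
    intro x
    rw [← lintegral_indicator_one (hS.preimage (measurable_prodMk_left))]
    rfl
  simp_rw [e1]
  rw [lintegral_lintegral_swap]
  · apply lintegral_congr
    intro b
    have : (fun x : Eu n => S.indicator (fun _ => (1 : ℝ≥0∞)) (x, b))
        = ((fun x : Eu n => (x, b)) ⁻¹' S).indicator (fun _ => (1 : ℝ≥0∞)) := rfl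
    rw [this]
    exact lintegral_indicator_one (hS.preimage (measurable_prodMk_right))
  · exact (measurable_one.indicator hS).aemeasurable

lemma Jint_ne_top (hn : 0 < n) (hc : IsCompact C) (hconv : Convex ℝ C)
    (h0 : (0 : Eu n) ∈ interior C) : Jint C ≠ ⊤ := by
  have hb : Jint C ≤ volume C := by
    rw [← lintegral_indicator_one hc.isClosed.measurableSet]
    apply lintegral_mono
    intro x
    by_cases hx : x ∈ C
    · show (ENNReal.ofReal (1 - gauge C x)) ^ n ≤ C.indicator (fun _ => (1:ℝ≥0∞)) x
      have h1 : ENNReal.ofReal (1 - gauge C x) ≤ 1 := by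
        rw [← ENNReal.ofReal_one]
        exact ENNReal.ofReal_le_ofReal (by linarith [gauge_nonneg (s := C) x])
      calc (ENNReal.ofReal (1 - gauge C x)) ^ n ≤ 1 ^ n := pow_le_pow_left' h1 n
        _ = 1 := one_pow n
        _ = C.indicator (fun _ => (1:ℝ≥0∞)) x :=
              (Set.indicator_of_mem hx (fun _ => (1:ℝ≥0∞))).symm
    · show (ENNReal.ofReal (1 - gauge C x)) ^ n ≤ C.indicator (fun _ => (1:ℝ≥0∞)) x
      have hg : 1 < gauge C x := by
        by_contra hle
        push_neg at hle
        exact hx ((gauge_le_one_iff hc hconv h0).1 hle)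
      rw [Set.indicator_of_notMem hx, ENNReal.ofReal_of_nonpos (by linarith),
        zero_pow hn.ne']
  exact (hb.trans_lt hc.measure_lt_top).ne

lemma Jint_ne_zero (hn : 0 < n) (hconv : Convex ℝ C)
    (h0 : (0 : Eu n) ∈ interior C) : Jint C ≠ 0 := by
  obtain ⟨ε, hε, hball⟩ := Metric.isOpen_iff.1 isOpen_interior 0 h0
  have hballC : Metric.ball (0 : Eu n) ε ⊆ C := hball.trans interior_subset
  have hlow : ∀ x ∈ Metric.ball (0 : Eu n) (ε / 2),
      ENNReal.ofReal (2⁻¹ : ℝ) ^ n ≤ (ENNReal.ofReal (1 - gauge C x)) ^ n := by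
    intro x hx
    apply pow_le_pow_left'
    apply ENNReal.ofReal_le_ofReal
    have hmg := mul_gauge_le_norm hballC (x := x)
    rw [Metric.mem_ball, dist_zero_right] at hx
    have hgn := gauge_nonneg (s := C) x
    nlinarith
  have hmain : ENNReal.ofReal (2⁻¹ : ℝ) ^ n * volume (Metric.ball (0 : Eu n) (ε / 2))
      ≤ Jint C := by
    rw [← lintegral_indicator_const measurableSet_ball (ENNReal.ofReal (2⁻¹ : ℝ) ^ n)]
    apply lintegral_mono
    intro x
    show (Metric.ball (0 : Eu n) (ε / 2)).indicator (fun _ => ENNReal.ofReal (2⁻¹ : ℝ) ^ n) x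
      ≤ (ENNReal.ofReal (1 - gauge C x)) ^ n
    by_cases hx : x ∈ Metric.ball (0 : Eu n) (ε / 2)
    · rw [Set.indicator_of_mem hx]
      exact hlow x hx
    · rw [Set.indicator_of_notMem hx]
      exact zero_le
  intro hJ
  rw [hJ, le_zero_iff, mul_eq_zero] at hmain
  rcases hmain with h | h
  · exact (pow_ne_zero n (by simp)) h
  · exact (Metric.measure_ball_pos volume 0 (by linarith)).ne' h

lemma volF_ge (hn : 0 < n)
    (hAc : IsCompact A) (hAconv : Convex ℝ A) (h0A : (0 : Eu n) ∈ interior A)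
    (hBc : IsCompact B) (hBconv : Convex ℝ B) (h0B : (0 : Eu n) ∈ interior B)
    (b : Eu n) :
    ENNReal.ofReal (1 - gauge (convexHull ℝ (A ∪ -B)) b) ^ n
        * volume {x : Eu n | gauge A x + gauge B x ≤ 1}
      ≤ volume {x : Eu n | gauge A x + gauge B (x - b) ≤ 1} := by
  set H := convexHull ℝ (A ∪ -B) with hHdef
  set N := {x : Eu n | gauge A x + gauge B x ≤ 1} with hNdef
  have hHconv : Convex ℝ H := convex_convexHull ℝ _
  have hHc : IsCompact H :=
    isCompact_convexHull_union hAc hBc.neg hAconv hBconv.neg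
      ⟨0, interior_subset h0A⟩ (Set.Nonempty.neg ⟨0, interior_subset h0B⟩)
  have h0H : (0 : Eu n) ∈ interior H :=
    interior_mono ((subset_union_left).trans (subset_convexHull ℝ _)) h0A
  have hAbsA := body_absorbent h0A
  have hAbsB := body_absorbent h0B
  have hSsub : H ⊆ {c : Eu n | ∃ x', gauge A x' + gauge B (x' - c) ≤ 1} := by
    apply convexHull_min
    · rintro c (hc | hc)
      · refine ⟨c, ?_⟩
        have h1 := gauge_le_one_of_mem hc
        have h2 : gauge B (c - c) = 0 := by rw [sub_self, gauge_zero]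
        linarith
      · refine ⟨0, ?_⟩
        rw [Set.mem_neg] at hc
        have h1 := gauge_le_one_of_mem hc
        have h2 : gauge A (0 : Eu n) = 0 := gauge_zero
        have h3 : (0 : Eu n) - c = -c := zero_sub c
        rw [h2, h3]
        linarith
    · rintro c₁ hc₁ c₂ hc₂ t u ht hu htu
      obtain ⟨x₁, hx₁⟩ := hc₁
      obtain ⟨x₂, hx₂⟩ := hc₂
      refine ⟨t • x₁ + u • x₂, ?_⟩
      have hga : gauge A (t • x₁ + u • x₂) ≤ t * gauge A x₁ + u * gauge A x₂ := by
        calc gauge A (t • x₁ + u • x₂) ≤ gauge A (t • x₁) + gauge A (u • x₂) :=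
              gauge_add_le hAconv hAbsA _ _
          _ = t * gauge A x₁ + u * gauge A x₂ := by
              rw [gauge_smul_of_nonneg ht, gauge_smul_of_nonneg hu, smul_eq_mul, smul_eq_mul]
      have heq : t • x₁ + u • x₂ - (t • c₁ + u • c₂) = t • (x₁ - c₁) + u • (x₂ - c₂) := by
        module
      have hgb : gauge B (t • x₁ + u • x₂ - (t • c₁ + u • c₂))
          ≤ t * gauge B (x₁ - c₁) + u * gauge B (x₂ - c₂) := by
        rw [heq]
        calc gauge B (t • (x₁ - c₁) + u • (x₂ - c₂))
            ≤ gauge B (t • (x₁ - c₁)) + gauge B (u • (x₂ - c₂)) :=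
              gauge_add_le hBconv hAbsB _ _
          _ = t * gauge B (x₁ - c₁) + u * gauge B (x₂ - c₂) := by
              rw [gauge_smul_of_nonneg ht, gauge_smul_of_nonneg hu, smul_eq_mul, smul_eq_mul]
      show gauge A (t • x₁ + u • x₂) + gauge B (t • x₁ + u • x₂ - (t • c₁ + u • c₂)) ≤ 1
      nlinarith [mul_le_mul_of_nonneg_left hx₁ ht, mul_le_mul_of_nonneg_left hx₂ hu]
  rcases le_or_gt 1 (gauge H b) with hr | hr
  · have hz : ENNReal.ofReal (1 - gauge H b) = 0 := ENNReal.ofReal_of_nonpos (by linarith)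
    rw [hz, zero_pow hn.ne', zero_mul]
    exact zero_le
  rcases eq_or_ne b 0 with rfl | hb0
  · have hsub : N ⊆ {x : Eu n | gauge A x + gauge B (x - 0) ≤ 1} := by
      intro x hx
      simpa using (show gauge A x + gauge B x ≤ 1 from hx)
    calc ENNReal.ofReal (1 - gauge H 0) ^ n * volume N = volume N := by
          rw [gauge_zero, sub_zero, ENNReal.ofReal_one, one_pow, one_mul]
      _ ≤ _ := measure_mono hsub
  · set r := gauge H b with hrdef
    have hrpos : 0 < r :=
      (gauge_pos (body_absorbent h0H)
        (NormedSpace.isVonNBounded_of_isBounded _ hHc.isBounded)).2 hb0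
    set b' := r⁻¹ • b with hb'def
    have hb'H : b' ∈ H := by
      rw [← gauge_le_one_iff hHc hHconv h0H, hb'def,
        gauge_smul_of_nonneg (inv_nonneg.2 hrpos.le), smul_eq_mul, ← hrdef,
        inv_mul_cancel₀ hrpos.ne']
    obtain ⟨x', hx'⟩ := hSsub hb'H
    have hrb : r • b' = b := smul_inv_smul₀ hrpos.ne' b
    have hkey : (r • x') +ᵥ ((1 - r) • N) ⊆ {x : Eu n | gauge A x + gauge B (x - b) ≤ 1} := by
      intro v hv
      obtain ⟨w, hw, rfl⟩ := hv
      obtain ⟨z, hz, rfl⟩ := hw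
      have hzN : gauge A z + gauge B z ≤ 1 := hz
      show gauge A (r • x' + (1 - r) • z) + gauge B (r • x' + (1 - r) • z - b) ≤ 1
      have hsplit : r • x' + (1 - r) • z - b = r • (x' - b') + (1 - r) • z := by
        rw [← hrb]; module
      have hga : gauge A (r • x' + (1 - r) • z) ≤ r * gauge A x' + (1 - r) * gauge A z := by
        calc gauge A (r • x' + (1 - r) • z) ≤ gauge A (r • x') + gauge A ((1 - r) • z) :=
              gauge_add_le hAconv hAbsA _ _
          _ = r * gauge A x' + (1 - r) * gauge A z := by
              rw [gauge_smul_of_nonneg hrpos.le, gauge_smul_of_nonneg (by linarith : (0:ℝ) ≤ 1 - r),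
                smul_eq_mul, smul_eq_mul]
      have hgb : gauge B (r • x' + (1 - r) • z - b)
          ≤ r * gauge B (x' - b') + (1 - r) * gauge B z := by
        rw [hsplit]
        calc gauge B (r • (x' - b') + (1 - r) • z)
            ≤ gauge B (r • (x' - b')) + gauge B ((1 - r) • z) :=
              gauge_add_le hBconv hAbsB _ _
          _ = r * gauge B (x' - b') + (1 - r) * gauge B z := by
              rw [gauge_smul_of_nonneg hrpos.le, gauge_smul_of_nonneg (by linarith : (0:ℝ) ≤ 1 - r),
                smul_eq_mul, smul_eq_mul]
      nlinarith
    calc ENNReal.ofReal (1 - r) ^ n * volume N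
        = volume ((r • x') +ᵥ ((1 - r) • N)) := by
          rw [measure_vadd, Measure.addHaar_smul_of_nonneg volume (by linarith : (0:ℝ) ≤ 1 - r) N,
            finrank_euclideanSpace_fin, ENNReal.ofReal_pow (by linarith : (0:ℝ) ≤ 1 - r)]
      _ ≤ _ := measure_mono hkey

lemma master (hn : 0 < n)
    (hAc : IsCompact A) (hAconv : Convex ℝ A) (h0A : (0 : Eu n) ∈ interior A)
    (hBc : IsCompact B) (hBconv : Convex ℝ B) (h0B : (0 : Eu n) ∈ interior B) :
    volume {x : Eu n | gauge A x + gauge B x ≤ 1} * volume (convexHull ℝ (A ∪ -B))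
      ≤ volume A * volume B := by
  set H := convexHull ℝ (A ∪ -B) with hHdef
  set N := {x : Eu n | gauge A x + gauge B x ≤ 1} with hNdef
  have hHconv : Convex ℝ H := convex_convexHull ℝ _
  have hHc : IsCompact H :=
    isCompact_convexHull_union hAc hBc.neg hAconv hBconv.neg
      ⟨0, interior_subset h0A⟩ (Set.Nonempty.neg ⟨0, interior_subset h0B⟩)
  have h0H : (0 : Eu n) ∈ interior H :=
    interior_mono ((subset_union_left).trans (subset_convexHull ℝ _)) h0A
  have h1 : Jint H * volume N ≤ volume (Dset A B) := by
    rw [vol_Dset_shear hAconv h0A hBconv h0B]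
    calc Jint H * volume N
        = ∫⁻ b, ENNReal.ofReal (1 - gauge H b) ^ n * volume N := by
          exact (lintegral_mul_const _ (Jint_measurable hHconv h0H)).symm
      _ ≤ ∫⁻ b, volume {x : Eu n | gauge A x + gauge B (x - b) ≤ 1} :=
          lintegral_mono (volF_ge hn hAc hAconv h0A hBc hBconv h0B)
  have h2 : volume (Dset A B) = Jint A * volume B :=
    vol_Dset hn hAc hAconv h0A hBc hBconv h0B
  have h3 : Jint A * volume H = Jint H * volume A := by
    rw [← vol_Dset hn hAc hAconv h0A hHc hHconv h0H,
      vol_Dset_swap hAconv h0A hHconv h0H,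
      vol_Dset hn hHc hHconv h0H hAc hAconv h0A]
  have hJH0 : Jint H ≠ 0 := Jint_ne_zero hn hHconv h0H
  have hJHt : Jint H ≠ ⊤ := Jint_ne_top hn hHc hHconv h0H
  rw [← ENNReal.mul_le_mul_iff_right hJH0 hJHt]
  calc Jint H * (volume N * volume H)
      = (Jint H * volume N) * volume H := by ring
    _ ≤ (Jint A * volume B) * volume H := mul_le_mul_left (h1.trans_eq h2) _
    _ = (Jint A * volume H) * volume B := by ring
    _ = (Jint H * volume A) * volume B := by rw [h3]
    _ = Jint H * (volume A * volume B) := by ring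


/-! ### set identities for the polar statement -/

lemma vol_two_smul (hn : 0 < n) (S : Set (Eu n)) :
    volume ((2 : ℝ) • S) = (2 : ℝ≥0∞) ^ n * volume S := by
  rw [Measure.addHaar_smul_of_nonneg volume (by norm_num : (0:ℝ) ≤ 2) S,
    finrank_euclideanSpace_fin]
  congr 1
  rw [ENNReal.ofReal_pow (by norm_num : (0:ℝ) ≤ 2), ENNReal.ofReal_ofNat]

lemma polar_half_sub (hKc : IsCompact K) (hLc : IsCompact L)
    (h0K : (0 : Eu n) ∈ K) (h0L : (0 : Eu n) ∈ L) :
    polarBody ((2:ℝ)⁻¹ • (K - L))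
      = (2:ℝ) • {x : Eu n | gauge (polarBody K) x + gauge (polarBody (-L)) x ≤ 1} := by
  have h0L' : (0 : Eu n) ∈ -L := by simpa using h0L
  ext x
  have hgK := gauge_polar_eq_supp hKc h0K x
  have hgL := gauge_polar_eq_supp hLc.neg h0L' x
  rw [Set.mem_smul_set_iff_inv_smul_mem₀ (two_ne_zero (α := ℝ)), Set.mem_setOf_eq,
    gauge_smul_of_nonneg (by norm_num : (0:ℝ) ≤ (2:ℝ)⁻¹),
    gauge_smul_of_nonneg (by norm_num : (0:ℝ) ≤ (2:ℝ)⁻¹), smul_eq_mul, smul_eq_mul,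
    hgK, hgL]
  constructor
  · intro hx
    have key : supp K x + supp (-L) x ≤ 2 := by
      have h1 : supp K x ≤ 2 - supp (-L) x := by
        apply csSup_le (Set.Nonempty.image _ ⟨0, h0K⟩)
        rintro a ⟨k, hk, rfl⟩
        have h2 : supp (-L) x ≤ 2 - ⟪x, k⟫ := by
          apply csSup_le (Set.Nonempty.image _ ⟨0, h0L'⟩)
          rintro a ⟨m, hm, rfl⟩
          rw [Set.mem_neg] at hm
          have hy : (2:ℝ)⁻¹ • (k - -m) ∈ (2:ℝ)⁻¹ • (K - L) :=
            Set.smul_mem_smul_set (Set.sub_mem_sub hk hm)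
          have h3 := hx _ hy
          rw [real_inner_smul_right, inner_sub_right, inner_neg_right] at h3
          linarith
        linarith
      linarith
    linarith
  · intro hx
    intro y hy
    obtain ⟨w, hw, rfl⟩ := hy
    obtain ⟨k, hk, l, hl, rfl⟩ := hw
    rw [real_inner_smul_right]
    have h1 : ⟪x, k⟫ ≤ supp K x := le_supp hKc hk x
    have h2 : ⟪x, -l⟫ ≤ supp (-L) x := le_supp hLc.neg (Set.neg_mem_neg.2 hl) x
    have h3 : ⟪x, k - l⟫ = ⟪x, k⟫ + ⟪x, -l⟫ := by
      rw [inner_sub_right, inner_neg_right]; ring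
    rw [h3]
    linarith

end PRS

theorem polar_rogers_shephard (n : ℕ) (hn : 0 < n)
    (K L : Set (EuclideanSpace ℝ (Fin n)))
    (hKc : IsCompact K) (hKconv : Convex ℝ K)
    (hLc : IsCompact L) (hLconv : Convex ℝ L)
    (h0K : (0 : EuclideanSpace ℝ (Fin n)) ∈ interior K)
    (h0L : (0 : EuclideanSpace ℝ (Fin n)) ∈ interior L) :
    volume (polarBody (K ∩ L)) * volume (polarBody ((2 : ℝ)⁻¹ • (K - L))) ≤
        (2 : ℝ≥0∞) ^ n * (volume (polarBody K) * volume (polarBody L)) ∧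
      volume (K ∩ L) * volume (convexHull ℝ (K ∪ -L)) ≤
        (2 : ℝ≥0∞) ^ n * (volume K * volume L) := by
  constructor
  · -- the polar inequality
    set A := polarBody K with hAdef
    set B := polarBody (-L) with hBdef
    have h0L' : (0 : EuclideanSpace ℝ (Fin n)) ∈ interior (-L) := by
      have hsub : -(interior L) ⊆ -L := Set.neg_subset_neg.2 interior_subset
      have hopen : IsOpen (-(interior L)) := isOpen_interior.neg
      exact interior_maximal hsub hopen (by simpa using h0L)
    have hLnc : IsCompact (-L) := hLc.neg
    have hAc : IsCompact A := PRS.polar_isCompact h0K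
    have hAconv := PRS.polar_convex K
    have h0A : (0 : EuclideanSpace ℝ (Fin n)) ∈ interior A :=
      PRS.zero_mem_interior_polar hKc
    have hBc : IsCompact B := PRS.polar_isCompact h0L'
    have hBconv := PRS.polar_convex (-L)
    have h0B : (0 : EuclideanSpace ℝ (Fin n)) ∈ interior B :=
      PRS.zero_mem_interior_polar hLnc
    have hnegB : -B = polarBody L := by rw [hBdef, PRS.polar_neg, neg_neg]
    have hset1 : polarBody (K ∩ L) = convexHull ℝ (A ∪ -B) := by
      rw [PRS.polar_inter hKc hKconv hLc hLconv h0K h0L, hnegB]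
    have hset2 : polarBody ((2:ℝ)⁻¹ • (K - L))
        = (2:ℝ) • {x : EuclideanSpace ℝ (Fin n) | gauge A x + gauge B x ≤ 1} :=
      PRS.polar_half_sub hKc hLc (interior_subset h0K) (interior_subset h0L)
    have hBL : volume B = volume (polarBody L) := by
      rw [hBdef, PRS.polar_neg]
      exact Measure.measure_neg volume _
    rw [hset1, hset2, PRS.vol_two_smul hn]
    calc volume (convexHull ℝ (A ∪ -B))
          * ((2:ℝ≥0∞)^n * volume {x : EuclideanSpace ℝ (Fin n) | gauge A x + gauge B x ≤ 1})
        = (2:ℝ≥0∞)^n * (volume {x : EuclideanSpace ℝ (Fin n) | gauge A x + gauge B x ≤ 1}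
            * volume (convexHull ℝ (A ∪ -B))) := by ring
      _ ≤ (2:ℝ≥0∞)^n * (volume A * volume B) :=
          mul_le_mul_right (PRS.master hn hAc hAconv h0A hBc hBconv h0B) _
      _ = (2:ℝ≥0∞)^n * (volume (polarBody K) * volume (polarBody L)) := by rw [hBL]
  · -- the convex hull inequality
    set N := {x : EuclideanSpace ℝ (Fin n) | gauge K x + gauge L x ≤ 1} with hNdef
    have hsub : K ∩ L ⊆ (2:ℝ) • N := by
      intro x hx
      rw [Set.mem_smul_set_iff_inv_smul_mem₀ (two_ne_zero (α := ℝ))]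
      show gauge K ((2:ℝ)⁻¹ • x) + gauge L ((2:ℝ)⁻¹ • x) ≤ 1
      rw [gauge_smul_of_nonneg (by norm_num : (0:ℝ) ≤ (2:ℝ)⁻¹),
        gauge_smul_of_nonneg (by norm_num : (0:ℝ) ≤ (2:ℝ)⁻¹), smul_eq_mul, smul_eq_mul]
      have h1 := gauge_le_one_of_mem hx.1
      have h2 := gauge_le_one_of_mem hx.2
      linarith
    calc volume (K ∩ L) * volume (convexHull ℝ (K ∪ -L))
        ≤ volume ((2:ℝ) • N) * volume (convexHull ℝ (K ∪ -L)) :=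
          mul_le_mul_left (measure_mono hsub) _
      _ = (2 : ℝ≥0∞) ^ n * (volume N * volume (convexHull ℝ (K ∪ -L))) := by
          rw [PRS.vol_two_smul hn, mul_assoc]
      _ ≤ (2 : ℝ≥0∞) ^ n * (volume K * volume L) :=
          mul_le_mul_right (PRS.master hn hKc hKconv h0K hLc hLconv h0L) _
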